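/- Let B be a unital C*-algebra and α a non-zero real number. For every a ∈ B with 0 ≤ a ≤ 1, one has (1 + α²) a (1 + α² a)^{-1} ∈ [0,1], and the map a ↦ (1 + α²) a (1 + α² a)^{-1} is an order automorphism of the effect algebra of B with inverse a ↦ a (1 + α²(1 − a))^{-1}. -/

import Mathlib

section Stmt6Aux

variable {B : Type*} [CStarAlgebra B] [PartialOrder B] [StarOrderedRing B]

lemma stmt6_sqrt_comm {x : B} (hx : 0 ≤ x) : Commute (CFC.sqrt x) x := by
  conv_rhs => rw [← CFC.sqrt_mul_sqrt_self x hx]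
  exact (Commute.refl _).mul_right (Commute.refl _)

lemma stmt6_aux_nonneg {x : B} (hx : 0 ≤ x) (u : Bˣ) (hu : 0 ≤ (u : B))
    (hcomm : Commute (CFC.sqrt x) (u : B)) : 0 ≤ x * ((u⁻¹ : Bˣ) : B) := by
  have h' : Commute (CFC.sqrt x) ((u⁻¹ : Bˣ) : B) := hcomm.units_inv_right
  have hinv : 0 ≤ ((u⁻¹ : Bˣ) : B) := CFC.inv_nonneg_of_nonneg u hu
  rw [← CFC.sqrt_mul_sqrt_self x hx, mul_assoc, h'.eq, ← mul_assoc]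
  exact conjugate_nonneg_of_nonneg hinv (CFC.sqrt_nonneg x)

lemma stmt6_smul_le_smul_iff {r : ℝ} (hr : 0 < r) {x y : B} : r • x ≤ r • y ↔ x ≤ y := by
  constructor
  · intro h
    have h2 := smul_le_smul_of_nonneg_left h (inv_nonneg.2 hr.le)
    rwa [smul_smul, smul_smul, inv_mul_cancel₀ hr.ne', one_smul, one_smul] at h2
  · exact fun h => smul_le_smul_of_nonneg_left h hr.le

end Stmt6Aux

/-- for a non-zero real `α`, the map
`a ↦ (1 + α²) a (1 + α² a)⁻¹` is an order automorphism of the effect algebra of `B`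
with inverse `a ↦ a (1 + α²(1 − a))⁻¹`. -/
theorem stmt6 {B : Type*} [CStarAlgebra B] [PartialOrder B] [StarOrderedRing B]
    (α : ℝ) (hα : α ≠ 0) :
    (∀ a : B, 0 ≤ a → a ≤ 1 →
      0 ≤ (1 + α ^ 2) • (a * Ring.inverse (1 + (α ^ 2) • a)) ∧
      (1 + α ^ 2) • (a * Ring.inverse (1 + (α ^ 2) • a)) ≤ 1) ∧
    (∀ a : B, 0 ≤ a → a ≤ 1 →
      ((1 + α ^ 2) • (a * Ring.inverse (1 + (α ^ 2) • a))) *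
          Ring.inverse (1 + (α ^ 2) • (1 - (1 + α ^ 2) • (a * Ring.inverse (1 + (α ^ 2) • a))))
        = a) ∧
    (∀ a : B, 0 ≤ a → a ≤ 1 →
      0 ≤ a * Ring.inverse (1 + (α ^ 2) • (1 - a)) ∧
      a * Ring.inverse (1 + (α ^ 2) • (1 - a)) ≤ 1 ∧
      (1 + α ^ 2) • ((a * Ring.inverse (1 + (α ^ 2) • (1 - a))) *
          Ring.inverse (1 + (α ^ 2) • (a * Ring.inverse (1 + (α ^ 2) • (1 - a)))))
        = a) ∧
    (∀ a b : B, 0 ≤ a → a ≤ 1 → 0 ≤ b → b ≤ 1 →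
      (a ≤ b ↔
        (1 + α ^ 2) • (a * Ring.inverse (1 + (α ^ 2) • a)) ≤
        (1 + α ^ 2) • (b * Ring.inverse (1 + (α ^ 2) • b)))) := by
  have ht : (0:ℝ) < α ^ 2 := by positivity
  have htc : (0:ℝ) < 1 + α ^ 2 := by positivity
  -- invertibility of `1 + α² • x` for `0 ≤ x`
  have hUnit : ∀ x : B, 0 ≤ x → IsUnit ((1:B) + α ^ 2 • x) := fun x hx =>
    CStarAlgebra.isUnit_of_le 1
      (le_add_of_nonneg_right (smul_nonneg ht.le hx)) isStrictlyPositive_one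
  have hpos : ∀ x : B, 0 ≤ x → (0:B) ≤ 1 + α ^ 2 • x := fun x hx =>
    add_nonneg zero_le_one (smul_nonneg ht.le hx)
  -- `1 - f(a) = (1 - a) * U⁻¹`
  have e2 : ∀ (a : B) (U : Bˣ), (U : B) = 1 + α ^ 2 • a →
      (1:B) - (1 + α ^ 2) • (a * ((U⁻¹ : Bˣ) : B)) = (1 - a) * ((U⁻¹ : Bˣ) : B) := by
    intro a U hU
    have hmul : ((1:B) + α ^ 2 • a) * ((U⁻¹ : Bˣ) : B) = 1 := by
      rw [← hU]; exact U.mul_inv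
    calc (1:B) - (1 + α ^ 2) • (a * ((U⁻¹ : Bˣ) : B))
        = ((1:B) + α ^ 2 • a) * ((U⁻¹ : Bˣ) : B)
            - ((1 + α ^ 2) • a) * ((U⁻¹ : Bˣ) : B) := by rw [hmul, smul_mul_assoc]
      _ = (((1:B) + α ^ 2 • a) - (1 + α ^ 2) • a) * ((U⁻¹ : Bˣ) : B) := by rw [sub_mul]
      _ = (1 - a) * ((U⁻¹ : Bˣ) : B) := by
          congr 1
          rw [add_smul, one_smul]
          abel
  -- commutation of square roots with the units
  have hcommU : ∀ (a : B), 0 ≤ a → ∀ (U : Bˣ), (U : B) = 1 + α ^ 2 • a →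
      Commute (CFC.sqrt a) (U : B) := by
    intro a ha U hU
    rw [hU]
    exact (Commute.one_right _).add_right ((stmt6_sqrt_comm ha).smul_right _)
  have hcommU' : ∀ (a : B), a ≤ 1 → ∀ (U : Bˣ), (U : B) = 1 + α ^ 2 • a →
      Commute (CFC.sqrt (1 - a)) (U : B) := by
    intro a ha1 U hU
    have h1a : Commute (CFC.sqrt (1 - a)) a := by
      have h := (Commute.one_right (CFC.sqrt (1 - a))).sub_right
        (stmt6_sqrt_comm (sub_nonneg.2 ha1))
      rwa [sub_sub_cancel] at h
    rw [hU]
    exact (Commute.one_right _).add_right (h1a.smul_right _)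
  have hcommV : ∀ (a : B), 0 ≤ a → ∀ (V : Bˣ), (V : B) = 1 + α ^ 2 • (1 - a) →
      Commute (CFC.sqrt a) (V : B) := by
    intro a ha V hV
    rw [hV]
    exact (Commute.one_right _).add_right
      (((Commute.one_right _).sub_right (stmt6_sqrt_comm ha)).smul_right _)
  -- `Ring.inverse ((1+α²) • U⁻¹) = (1+α²)⁻¹ • U`
  have hscaled : ∀ U : Bˣ,
      Ring.inverse ((1 + α ^ 2) • ((U⁻¹ : Bˣ) : B)) = (1 + α ^ 2)⁻¹ • (U : B) := by
    intro U
    have h1 : ((1 + α ^ 2) • ((U⁻¹ : Bˣ) : B)) * ((1 + α ^ 2)⁻¹ • (U : B)) = 1 := by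
      rw [smul_mul_assoc, mul_smul_comm, smul_smul, mul_inv_cancel₀ htc.ne', one_smul, U.inv_mul]
    have h2 : ((1 + α ^ 2)⁻¹ • (U : B)) * ((1 + α ^ 2) • ((U⁻¹ : Bˣ) : B)) = 1 := by
      rw [smul_mul_assoc, mul_smul_comm, smul_smul, inv_mul_cancel₀ htc.ne', one_smul, U.mul_inv]
    let W : Bˣ := ⟨(1 + α ^ 2) • ((U⁻¹ : Bˣ) : B), (1 + α ^ 2)⁻¹ • (U : B), h1, h2⟩
    have hWeq : (1 + α ^ 2) • ((U⁻¹ : Bˣ) : B) = (W : B) := rfl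
    rw [hWeq, Ring.inverse_unit]
    rfl
  refine ⟨?_, ?_, ?_, ?_⟩
  · -- Statement 1: bounds for f(a)
    intro a ha ha1
    obtain ⟨U, hU⟩ := hUnit a ha
    have hRinv : Ring.inverse ((1:B) + α ^ 2 • a) = ((U⁻¹ : Bˣ) : B) := by
      rw [← hU, Ring.inverse_unit]
    have hU0 : (0:B) ≤ U := by rw [hU]; exact hpos a ha
    constructor
    · rw [hRinv]
      exact smul_nonneg htc.le (stmt6_aux_nonneg ha U hU0 (hcommU a ha U hU))
    · rw [hRinv, ← sub_nonneg, e2 a U hU]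
      exact stmt6_aux_nonneg (sub_nonneg.2 ha1) U hU0 (hcommU' a ha1 U hU)
  · -- Statement 2: g(f(a)) = a
    intro a ha ha1
    obtain ⟨U, hU⟩ := hUnit a ha
    have hRinv : Ring.inverse ((1:B) + α ^ 2 • a) = ((U⁻¹ : Bˣ) : B) := by
      rw [← hU, Ring.inverse_unit]
    have hmul : ((1:B) + α ^ 2 • a) * ((U⁻¹ : Bˣ) : B) = 1 := by
      rw [← hU]; exact U.mul_inv
    rw [hRinv, e2 a U hU]
    have e3 : (1:B) + α ^ 2 • ((1 - a) * ((U⁻¹ : Bˣ) : B))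
        = (1 + α ^ 2) • ((U⁻¹ : Bˣ) : B) := by
      calc (1:B) + α ^ 2 • ((1 - a) * ((U⁻¹ : Bˣ) : B))
          = ((1:B) + α ^ 2 • a) * ((U⁻¹ : Bˣ) : B)
              + (α ^ 2 • (1 - a)) * ((U⁻¹ : Bˣ) : B) := by rw [hmul, smul_mul_assoc]
        _ = (((1:B) + α ^ 2 • a) + α ^ 2 • (1 - a)) * ((U⁻¹ : Bˣ) : B) := (add_mul _ _ _).symm
        _ = ((1 + α ^ 2) • (1:B)) * ((U⁻¹ : Bˣ) : B) := by
            congr 1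
            rw [smul_sub, add_smul, one_smul]
            abel
        _ = (1 + α ^ 2) • ((U⁻¹ : Bˣ) : B) := by rw [smul_mul_assoc, one_mul]
    rw [e3, hscaled U, mul_smul_comm, smul_mul_assoc, smul_smul,
      inv_mul_cancel₀ htc.ne', one_smul, mul_assoc, U.inv_mul, mul_one]
  · -- Statement 3: bounds for g(a) and f(g(a)) = a
    intro a ha ha1
    have h1a : (0:B) ≤ 1 - a := sub_nonneg.2 ha1
    obtain ⟨V, hV⟩ := hUnit (1 - a) h1a
    have hRinv : Ring.inverse ((1:B) + α ^ 2 • (1 - a)) = ((V⁻¹ : Bˣ) : B) := by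
      rw [← hV, Ring.inverse_unit]
    have hV0 : (0:B) ≤ V := by rw [hV]; exact hpos _ h1a
    have hmulV : ((1:B) + α ^ 2 • (1 - a)) * ((V⁻¹ : Bˣ) : B) = 1 := by
      rw [← hV]; exact V.mul_inv
    have hg0 : 0 ≤ a * ((V⁻¹ : Bˣ) : B) :=
      stmt6_aux_nonneg ha V hV0 (hcommV a ha V hV)
    refine ⟨by rw [hRinv]; exact hg0, ?_, ?_⟩
    · rw [hRinv, ← sub_nonneg]
      have e4 : (1:B) - a * ((V⁻¹ : Bˣ) : B)
          = (1 + α ^ 2) • ((1 - a) * ((V⁻¹ : Bˣ) : B)) := by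
        calc (1:B) - a * ((V⁻¹ : Bˣ) : B)
            = ((1:B) + α ^ 2 • (1 - a)) * ((V⁻¹ : Bˣ) : B)
                - a * ((V⁻¹ : Bˣ) : B) := by rw [hmulV]
          _ = (((1:B) + α ^ 2 • (1 - a)) - a) * ((V⁻¹ : Bˣ) : B) := by rw [sub_mul]
          _ = ((1 + α ^ 2) • (1 - a)) * ((V⁻¹ : Bˣ) : B) := by
              congr 1
              rw [smul_sub, add_smul, one_smul, smul_sub]
              abel
          _ = (1 + α ^ 2) • ((1 - a) * ((V⁻¹ : Bˣ) : B)) := by rw [smul_mul_assoc]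
      rw [e4]
      exact smul_nonneg htc.le
        (stmt6_aux_nonneg h1a V hV0 (hcommU (1 - a) h1a V hV))
    · rw [hRinv]
      have e5 : (1:B) + α ^ 2 • (a * ((V⁻¹ : Bˣ) : B))
          = (1 + α ^ 2) • ((V⁻¹ : Bˣ) : B) := by
        calc (1:B) + α ^ 2 • (a * ((V⁻¹ : Bˣ) : B))
            = ((1:B) + α ^ 2 • (1 - a)) * ((V⁻¹ : Bˣ) : B)
                + (α ^ 2 • a) * ((V⁻¹ : Bˣ) : B) := by rw [hmulV, smul_mul_assoc]
          _ = (((1:B) + α ^ 2 • (1 - a)) + α ^ 2 • a) * ((V⁻¹ : Bˣ) : B) := (add_mul _ _ _).symm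
          _ = ((1 + α ^ 2) • (1:B)) * ((V⁻¹ : Bˣ) : B) := by
              congr 1
              rw [smul_sub, add_smul, one_smul]
              abel
          _ = (1 + α ^ 2) • ((V⁻¹ : Bˣ) : B) := by rw [smul_mul_assoc, one_mul]
      rw [e5, hscaled V, mul_smul_comm, smul_smul,
        mul_inv_cancel₀ htc.ne', one_smul, mul_assoc, V.inv_mul, mul_one]
  · -- Statement 4: order isomorphism
    intro a b ha ha1 hb hb1
    obtain ⟨U, hU⟩ := hUnit a ha
    obtain ⟨W, hW⟩ := hUnit b hb
    have hRinvU : Ring.inverse ((1:B) + α ^ 2 • a) = ((U⁻¹ : Bˣ) : B) := by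
      rw [← hU, Ring.inverse_unit]
    have hRinvW : Ring.inverse ((1:B) + α ^ 2 • b) = ((W⁻¹ : Bˣ) : B) := by
      rw [← hW, Ring.inverse_unit]
    have hU0 : (0:B) ≤ U := by rw [hU]; exact hpos a ha
    have hW0 : (0:B) ≤ W := by rw [hW]; exact hpos b hb
    have key : ∀ (x : B) (X : Bˣ), (X : B) = 1 + α ^ 2 • x →
        (1 + α ^ 2) • (x * ((X⁻¹ : Bˣ) : B))
          = ((1 + α ^ 2) / α ^ 2) • ((1:B) - ((X⁻¹ : Bˣ) : B)) := by
      intro x X hX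
      have hmul : ((1:B) + α ^ 2 • x) * ((X⁻¹ : Bˣ) : B) = 1 := by
        rw [← hX]; exact X.mul_inv
      calc (1 + α ^ 2) • (x * ((X⁻¹ : Bˣ) : B))
          = ((1 + α ^ 2) / α ^ 2) • (α ^ 2 • (x * ((X⁻¹ : Bˣ) : B))) := by
            rw [smul_smul, div_mul_cancel₀ _ ht.ne']
        _ = ((1 + α ^ 2) / α ^ 2) • ((α ^ 2 • x) * ((X⁻¹ : Bˣ) : B)) := by
            rw [smul_mul_assoc]
        _ = ((1 + α ^ 2) / α ^ 2) • ((((1:B) + α ^ 2 • x) - 1) * ((X⁻¹ : Bˣ) : B)) := by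
            rw [add_sub_cancel_left]
        _ = ((1 + α ^ 2) / α ^ 2) • ((1:B) - ((X⁻¹ : Bˣ) : B)) := by
            rw [sub_mul, hmul, one_mul]
    rw [hRinvU, hRinvW, key a U hU, key b W hW,
      stmt6_smul_le_smul_iff (by positivity : (0:ℝ) < (1 + α ^ 2) / α ^ 2),
      sub_le_sub_iff_left, CStarAlgebra.inv_le_inv_iff hW0 hU0, hU, hW,
      add_le_add_iff_left, stmt6_smul_le_smul_iff ht]
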